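/- Let A be a finite set, and for i in [1:n-1] let f_i : A → B_i be functions into finite sets B_i. Then the set C = {(a_1,...,a_n) ∈ A^n : f_i(a_i) = f_i(a_{i+1}) for all i ∈ [1:n-1]} satisfies |C| ≥ |A|^n / Π_{i=1}^{n-1} |B_i|. -/

import Mathlib

open Finset

lemma markov {A : Type*} [Fintype A] :
    ∀ (n : ℕ) (P : Fin n → A → A → ℝ),
    (∀ i x, ∑ y, P i x y = 1) → (∀ i y, ∑ x, P i x y = 1) →
    ∀ (g : A → ℝ) (k : Fin (n + 1)),
    ∑ c : Fin (n + 1) → A, (∏ i, P i (c i.castSucc) (c i.succ)) * g (c k) = ∑ x, g x := by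
  intro n
  induction n with
  | zero =>
    intro P _ _ g k
    rw [← (Equiv.funUnique (Fin 1) A).symm.sum_comp
      (fun c => (∏ i, P i (c i.castSucc) (c i.succ)) * g (c k))]
    simp [Fin.eq_zero k]
  | succ n ih =>
    intro P hrow hcol g k
    have step : ∀ (G : (Fin (n + 2) → A) → ℝ),
        ∑ c : Fin (n + 2) → A, G c = ∑ x : A, ∑ c : Fin (n + 1) → A, G (Fin.cons x c) := by
      intro G
      rw [← ((Fin.consEquiv (fun _ : Fin (n+2) => A)).sum_comp G)]
      rw [Fintype.sum_prod_type]
      rfl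
    rw [step]
    have hprod : ∀ (x : A) (c : Fin (n + 1) → A),
        (∏ i : Fin (n+1), P i ((Fin.cons x c : Fin (n+2) → A) i.castSucc)
          ((Fin.cons x c : Fin (n+2) → A) i.succ))
        = P 0 x (c 0) * ∏ i : Fin n, P i.succ (c i.castSucc) (c i.succ) := by
      intro x c
      rw [Fin.prod_univ_succ]
      simp [← Fin.succ_castSucc]
    induction k using Fin.cases with
    | zero =>
      have key : ∀ x : A, ∑ c : Fin (n+1) → A,
          (∏ i : Fin (n+1), P i ((Fin.cons x c : Fin (n+2) → A) i.castSucc)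
            ((Fin.cons x c : Fin (n+2) → A) i.succ)) * g ((Fin.cons x c : Fin (n+2) → A) 0)
          = g x := by
        intro x
        have h2 := ih (fun i => P i.succ) (fun i z => hrow i.succ z) (fun i z => hcol i.succ z)
          (fun z => P 0 x z) 0
        simp only [hprod, Fin.cons_zero]
        calc ∑ c : Fin (n+1) → A,
              (P 0 x (c 0) * ∏ i : Fin n, P i.succ (c i.castSucc) (c i.succ)) * g x
            = (∑ c : Fin (n+1) → A,
                (∏ i : Fin n, P i.succ (c i.castSucc) (c i.succ)) * P 0 x (c 0)) * g x := by
              rw [Finset.sum_mul]; exact Finset.sum_congr rfl fun c _ => by ring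
          _ = g x := by rw [h2, hrow 0 x, one_mul]
      exact Finset.sum_congr rfl fun x _ => key x
    | succ j =>
      have key : ∀ c : Fin (n+1) → A, ∑ x : A,
          (∏ i : Fin (n+1), P i ((Fin.cons x c : Fin (n+2) → A) i.castSucc)
            ((Fin.cons x c : Fin (n+2) → A) i.succ)) * g ((Fin.cons x c : Fin (n+2) → A) j.succ)
          = (∏ i : Fin n, P i.succ (c i.castSucc) (c i.succ)) * g (c j) := by
        intro c
        simp only [hprod]
        simp only [Fin.cons_succ]
        calc ∑ x, (P 0 x (c 0) * ∏ i : Fin n, P i.succ (c i.castSucc) (c i.succ)) * g (c j)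
            = (∑ x, P 0 x (c 0)) * ((∏ i : Fin n, P i.succ (c i.castSucc) (c i.succ)) * g (c j)) := by
              rw [Finset.sum_mul]; exact Finset.sum_congr rfl fun x _ => by ring
          _ = _ := by rw [hcol 0 (c 0), one_mul]
      rw [Finset.sum_comm]
      rw [Finset.sum_congr rfl fun c _ => key c]
      exact ih (fun i => P i.succ) (fun i z => hrow i.succ z) (fun i z => hcol i.succ z) g j

theorem stmt2 (n : ℕ) (A : Type*) [Fintype A]
    (B : Fin n → Type*) [∀ i, Fintype (B i)]
    (f : ∀ i, A → B i) :
    ((Fintype.card A : ℝ)) ^ (n + 1) / ∏ i, (Fintype.card (B i) : ℝ) ≤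
      Nat.card {a : Fin (n + 1) → A //
        ∀ i : Fin n, f i (a i.castSucc) = f i (a i.succ)} := by
  classical
  rcases isEmpty_or_nonempty A with hA | hA
  · have h0 : (Fintype.card A : ℝ) = 0 := by simp
    rw [h0, zero_pow (Nat.succ_ne_zero n), zero_div]
    exact Nat.cast_nonneg _
  -- Nonempty case
  set a : ℕ := Fintype.card A with ha
  have hapos : 0 < (a : ℝ) := by exact_mod_cast Fintype.card_pos
  -- fiber sizes
  set d : Fin n → A → ℕ := fun i x => (Finset.univ.filter fun y => f i y = f i x).card with hd
  have hd1 : ∀ i x, 1 ≤ d i x := fun i x =>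
    Finset.card_pos.mpr ⟨x, by simp [hd]⟩
  have hdpos : ∀ i x, (0 : ℝ) < (d i x : ℝ) := fun i x => by exact_mod_cast hd1 i x
  have hdfib : ∀ i x y, f i y = f i x → d i y = d i x := by
    intro i x y h
    simp only [hd]
    congr 1
    apply Finset.filter_congr
    intro z _
    rw [h]
  set P : Fin n → A → A → ℝ :=
    fun i x y => if f i y = f i x then ((d i x : ℝ))⁻¹ else 0 with hP
  have hPnn : ∀ i x y, 0 ≤ P i x y := by
    intro i x y
    simp only [hP]
    split
    · positivity
    · exact le_refl 0
  have hrow : ∀ i x, ∑ y, P i x y = 1 := by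
    intro i x
    simp only [hP]
    rw [← Finset.sum_filter, Finset.sum_const, nsmul_eq_mul]
    rw [mul_inv_cancel₀ (ne_of_gt (hdpos i x))]
  have hcol : ∀ i y, ∑ x, P i x y = 1 := by
    intro i y
    have : ∀ x : A, P i x y = if f i x = f i y then ((d i y : ℝ))⁻¹ else 0 := by
      intro x
      simp only [hP]
      by_cases h : f i y = f i x
      · rw [if_pos h, if_pos h.symm, hdfib i x y h]
      · rw [if_neg h, if_neg (fun hh => h hh.symm)]
    rw [Finset.sum_congr rfl fun x _ => this x]
    rw [← Finset.sum_filter, Finset.sum_const, nsmul_eq_mul]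
    have hc : (Finset.univ.filter fun x => f i x = f i y).card = d i y := rfl
    rw [hc]
    exact mul_inv_cancel₀ (ne_of_gt (hdpos i y))
  set w : (Fin (n+1) → A) → ℝ := fun c => ∏ i, P i (c i.castSucc) (c i.succ) with hw
  have hwnn : ∀ c, 0 ≤ w c := fun c => Finset.prod_nonneg fun i _ => hPnn _ _ _
  have hwsum : ∑ c, w c = (a : ℝ) := by
    have := markov n P hrow hcol (fun _ => 1) 0
    simpa [hw, ha] using this
  set z : (Fin (n+1) → A) → ℝ := fun c => ∏ i, (d i (c i.castSucc) : ℝ) with hz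
  have hz1 : ∀ c, 1 ≤ z c := by
    intro c
    show (1:ℝ) ≤ ∏ i : Fin n, (d i (c i.castSucc) : ℝ)
    have h := Finset.one_le_prod' (fun i (_ : i ∈ Finset.univ) => hd1 i (c i.castSucc))
    exact_mod_cast h
  have hzpos : ∀ c, 0 < z c := fun c => lt_of_lt_of_le one_pos (hz1 c)
  -- w c * z c is the indicator of the chain condition
  have hwz : ∀ c, w c * z c =
      if (∀ i : Fin n, f i (c i.castSucc) = f i (c i.succ)) then 1 else 0 := by
    intro c
    by_cases hc : ∀ i : Fin n, f i (c i.castSucc) = f i (c i.succ)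
    · rw [if_pos hc, hw, hz, ← Finset.prod_mul_distrib]
      apply Finset.prod_eq_one
      intro i _
      have : P i (c i.castSucc) (c i.succ) = ((d i (c i.succ) : ℝ))⁻¹ := by
        simp only [hP]
        rw [if_pos (hc i).symm]
        rw [hdfib i (c i.succ) (c i.castSucc) (hc i)]
      rw [this, hdfib i (c i.succ) (c i.castSucc) (hc i)]
      exact inv_mul_cancel₀ (ne_of_gt (hdpos i (c i.succ)))
    · push_neg at hc
      obtain ⟨i, hi⟩ := hc
      rw [if_neg (by push_neg; exact ⟨i, hi⟩)]
      have : w c = 0 := by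
        rw [hw]
        apply Finset.prod_eq_zero (Finset.mem_univ i)
        simp only [hP]
        rw [if_neg (fun hh => hi hh.symm)]
      rw [this, zero_mul]
  -- the chain count
  have hN : ∑ c, w c * z c =
      (Nat.card {a : Fin (n + 1) → A //
        ∀ i : Fin n, f i (a i.castSucc) = f i (a i.succ)} : ℝ) := by
    rw [Finset.sum_congr rfl fun c _ => hwz c]
    rw [Finset.sum_boole, Nat.card_eq_fintype_card, Fintype.card_subtype]
  -- Jensen for exp
  have hJ : Real.exp (∑ c, (w c / a) * Real.log (z c)) ≤ ∑ c, (w c / a) * z c := by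
    have hmem : ∀ c ∈ (Finset.univ : Finset (Fin (n+1) → A)),
        Real.log (z c) ∈ (Set.univ : Set ℝ) := fun _ _ => Set.mem_univ _
    have h0 : ∀ c ∈ (Finset.univ : Finset (Fin (n+1) → A)), 0 ≤ w c / a :=
      fun c _ => div_nonneg (hwnn c) (le_of_lt hapos)
    have h1 : ∑ c, w c / (a : ℝ) = 1 := by
      rw [← Finset.sum_div, hwsum, div_self (ne_of_gt hapos)]
    have := convexOn_exp.map_sum_le h0 h1 hmem
    simp only [smul_eq_mul, Function.comp] at this
    calc Real.exp (∑ c, (w c / a) * Real.log (z c)) ≤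
        ∑ c, (w c / a) * Real.exp (Real.log (z c)) := this
      _ = ∑ c, (w c / a) * z c := by
        exact Finset.sum_congr rfl fun c _ => by rw [Real.exp_log (hzpos c)]
  -- compute the exponent
  have hexp : ∑ c, (w c / a) * Real.log (z c) =
      ∑ i : Fin n, (1 / a) * ∑ x, Real.log (d i x) := by
    have hlog : ∀ c, Real.log (z c) = ∑ i : Fin n, Real.log (d i (c i.castSucc)) := by
      intro c
      rw [hz, Real.log_prod]
      intro i _
      exact ne_of_gt (hdpos i _)
    calc ∑ c, (w c / a) * Real.log (z c)
        = ∑ c, ∑ i : Fin n, (1/a) * (w c * Real.log (d i (c i.castSucc))) := by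
          apply Finset.sum_congr rfl
          intro c _
          rw [hlog c, Finset.mul_sum]
          apply Finset.sum_congr rfl
          intro i _
          ring
      _ = ∑ i : Fin n, (1/a) * ∑ c, w c * Real.log (d i (c i.castSucc)) := by
          rw [Finset.sum_comm]
          exact Finset.sum_congr rfl fun i _ => by rw [Finset.mul_sum]
      _ = ∑ i : Fin n, (1 / a) * ∑ x, Real.log (d i x) := by
          apply Finset.sum_congr rfl
          intro i _
          congr 1
          exact markov n P hrow hcol (fun x => Real.log (d i x)) i.castSucc
  -- per-coordinate lower bound
  have hBpos : ∀ i : Fin n, (0 : ℝ) < (Fintype.card (B i) : ℝ) := by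
    intro i
    have : Nonempty (B i) := ⟨f i (Classical.arbitrary A)⟩
    exact_mod_cast Fintype.card_pos
  have hterm : ∀ i : Fin n,
      (a : ℝ) / (Fintype.card (B i) : ℝ) ≤ Real.exp ((1 / a) * ∑ x, Real.log (d i x)) := by
    intro i
    have hharm : ∑ x : A, ((d i x : ℝ))⁻¹ ≤ (Fintype.card (B i) : ℝ) := by
      calc ∑ x : A, ((d i x : ℝ))⁻¹
          = ∑ b : B i, ∑ x ∈ Finset.univ.filter (fun x => f i x = b), ((d i x : ℝ))⁻¹ :=
            (Finset.sum_fiberwise Finset.univ (f i) _).symm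
        _ ≤ ∑ b : B i, 1 := by
            apply Finset.sum_le_sum
            intro b _
            by_cases hb : (Finset.univ.filter (fun x => f i x = b)).Nonempty
            · obtain ⟨x0, hx0⟩ := hb
              have hx0' : f i x0 = b := by simpa using hx0
              have : ∀ x ∈ Finset.univ.filter (fun x => f i x = b),
                  ((d i x : ℝ))⁻¹ = ((d i x0 : ℝ))⁻¹ := by
                intro x hx
                have hx' : f i x = b := by simpa using hx
                rw [hdfib i x0 x (by rw [hx', hx0'])]
              rw [Finset.sum_congr rfl this, Finset.sum_const, nsmul_eq_mul]
              have hcardeq : (Finset.univ.filter (fun x => f i x = b)).card = d i x0 := by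
                simp only [hd]
                congr 1
                apply Finset.filter_congr
                intro y _
                rw [hx0']
              rw [hcardeq, mul_inv_cancel₀ (ne_of_gt (hdpos i x0))]
            · rw [Finset.not_nonempty_iff_eq_empty] at hb
              rw [hb, Finset.sum_empty]
              exact zero_le_one
        _ = (Fintype.card (B i) : ℝ) := by
            rw [Finset.sum_const, nsmul_eq_mul, mul_one, Finset.card_univ]
    -- Jensen for exp applied to 1/d
    have hJ2 : Real.exp (∑ x : A, (1 / a) * Real.log ((d i x : ℝ))⁻¹) ≤
        ∑ x : A, (1 / a) * ((d i x : ℝ))⁻¹ := by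
      have h0 : ∀ x ∈ (Finset.univ : Finset A), 0 ≤ (1 / a : ℝ) :=
        fun x _ => by positivity
      have h1 : ∑ _x : A, (1 / a : ℝ) = 1 := by
        rw [Finset.sum_const, Finset.card_univ, ← ha, nsmul_eq_mul, mul_one_div,
          div_self (ne_of_gt hapos)]
      have := convexOn_exp.map_sum_le h0 h1
        (fun x (_ : x ∈ Finset.univ) => Set.mem_univ (Real.log ((d i x : ℝ))⁻¹))
      simp only [smul_eq_mul, Function.comp] at this
      calc Real.exp (∑ x : A, (1 / a) * Real.log ((d i x : ℝ))⁻¹) ≤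
          ∑ x : A, (1 / a) * Real.exp (Real.log ((d i x : ℝ))⁻¹) := this
        _ = ∑ x : A, (1 / a) * ((d i x : ℝ))⁻¹ := by
          apply Finset.sum_congr rfl
          intro x _
          rw [Real.exp_log (inv_pos.mpr (hdpos i x))]
    have hneg : ∑ x : A, (1 / a : ℝ) * Real.log ((d i x : ℝ))⁻¹ =
        -((1 / a) * ∑ x, Real.log (d i x)) := by
      rw [Finset.mul_sum, ← Finset.sum_neg_distrib]
      apply Finset.sum_congr rfl
      intro x _
      rw [Real.log_inv]
      ring
    have hb : ∑ x : A, (1 / a : ℝ) * ((d i x : ℝ))⁻¹ ≤ (Fintype.card (B i) : ℝ) / a := by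
      rw [← Finset.mul_sum, one_div, div_eq_mul_inv, mul_comm ((Fintype.card (B i) : ℝ))]
      exact mul_le_mul_of_nonneg_left hharm (inv_nonneg.mpr (le_of_lt hapos))
    have hle : Real.exp (-((1 / a) * ∑ x, Real.log (d i x))) ≤ (Fintype.card (B i) : ℝ) / a := by
      rw [← hneg]
      exact le_trans hJ2 hb
    rw [Real.exp_neg] at hle
    have h1 : (0:ℝ) < Real.exp ((1 / a) * ∑ x, Real.log (d i x)) := Real.exp_pos _
    have h2 : (0:ℝ) < (Fintype.card (B i) : ℝ) / a := div_pos (hBpos i) hapos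
    calc (a : ℝ) / (Fintype.card (B i) : ℝ) = ((Fintype.card (B i) : ℝ) / a)⁻¹ := by
          rw [inv_div]
      _ ≤ ((Real.exp ((1 / a) * ∑ x, Real.log (d i x)))⁻¹)⁻¹ := by
          apply inv_anti₀ (inv_pos.mpr (Real.exp_pos _)) hle
      _ = Real.exp ((1 / a) * ∑ x, Real.log (d i x)) := inv_inv _
  -- put it together
  have main : (a : ℝ) * ∏ i : Fin n, ((a : ℝ) / (Fintype.card (B i) : ℝ)) ≤
      (Nat.card {a : Fin (n + 1) → A //
        ∀ i : Fin n, f i (a i.castSucc) = f i (a i.succ)} : ℝ) := by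
    rw [← hN]
    have e1 : ∑ c, w c * z c = (a : ℝ) * ∑ c, (w c / a) * z c := by
      rw [Finset.mul_sum]
      apply Finset.sum_congr rfl
      intro c _
      field_simp
    rw [e1]
    apply mul_le_mul_of_nonneg_left _ (le_of_lt hapos)
    calc ∏ i : Fin n, ((a : ℝ) / (Fintype.card (B i) : ℝ))
        ≤ ∏ i : Fin n, Real.exp ((1 / a) * ∑ x, Real.log (d i x)) := by
          apply Finset.prod_le_prod
          · intro i _
            positivity
          · intro i _
            exact hterm i
      _ = Real.exp (∑ i : Fin n, (1 / a) * ∑ x, Real.log (d i x)) := (Real.exp_sum _ _).symm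
      _ = Real.exp (∑ c, (w c / a) * Real.log (z c)) := by rw [hexp]
      _ ≤ ∑ c, (w c / a) * z c := hJ
  calc ((a : ℝ)) ^ (n + 1) / ∏ i, (Fintype.card (B i) : ℝ)
      = (a : ℝ) * ∏ i : Fin n, ((a : ℝ) / (Fintype.card (B i) : ℝ)) := by
        rw [Finset.prod_div_distrib, Finset.prod_const, Finset.card_univ, Fintype.card_fin]
        rw [pow_succ]
        field_simp
    _ ≤ _ := main
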